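/- Let A ∈ M(4,ℂ) with A and A* having no common eigenvector, and let v ≠ 0 satisfy dim W(v) = 2 where W(v) = span{v,Av,A*v}, together with W(v) + A·W(v) = W(v) + A*·W(v) =: W₃ with dim W₃ = 3. Then the flag 0 ⊂ ℂv ⊂ W(v) ⊂ W₃ ⊂ ℂ⁴ satisfies A Wᵢ ⊆ W_{i+1} and A* Wᵢ ⊆ W_{i+1} for all i, and hence A is unitarily tridiagonalisable. -/

import Mathlib

open Matrix

/-- A matrix is tridiagonal if all entries with |i-j| ≥ 2 vanish. -/
def IsTridiagonal {n : ℕ} (B : Matrix (Fin n) (Fin n) ℂ) : Prop :=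
  ∀ i j : Fin n, 2 ≤ |(i : ℤ) - (j : ℤ)| → B i j = 0

/-- A is unitarily tridiagonalisable. -/
def IsUnitarilyTridiagonalisable {n : ℕ} (A : Matrix (Fin n) (Fin n) ℂ) : Prop :=
  ∃ U ∈ Matrix.unitaryGroup (Fin n) ℂ, IsTridiagonal (U * A * Uᴴ)

section Aux

open Submodule Module Set InnerProductSpace

/-- Inner product of an orthonormal vector with elements of the span of other vectors
vanishes. -/
lemma inner_eq_zero_of_mem_span_ortho {E : Type*} [NormedAddCommGroup E]
    [InnerProductSpace ℂ E] {ι : Type*} {b : ι → E} (hb : Orthonormal ℂ b)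
    {s : Set ι} {i : ι} (hi : i ∉ s) {x : E} (hx : x ∈ span ℂ (b '' s)) :
    (inner ℂ (b i) x : ℂ) = 0 := by
  induction hx using Submodule.span_induction with
  | mem y hy =>
    obtain ⟨j, hj, rfl⟩ := hy
    exact hb.2 (fun h => hi (h ▸ hj))
  | zero => exact inner_zero_right _
  | add y z _ _ hy hz => rw [inner_add_right, hy, hz, add_zero]
  | smul c y _ hy => rw [inner_smul_right, hy, mul_zero]

lemma tridiag_of_flag (A : Matrix (Fin 4) (Fin 4) ℂ) (F₁ F₂ F₃ : Submodule ℂ (Fin 4 → ℂ))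
    (h12 : F₁ ≤ F₂) (h23 : F₂ ≤ F₃)
    (d1 : Module.finrank ℂ F₁ = 1) (d2 : Module.finrank ℂ F₂ = 2)
    (d3 : Module.finrank ℂ F₃ = 3)
    (hA1 : F₁.map A.mulVecLin ≤ F₂) (hA2 : F₂.map A.mulVecLin ≤ F₃)
    (hB1 : F₁.map Aᴴ.mulVecLin ≤ F₂) (hB2 : F₂.map Aᴴ.mulVecLin ≤ F₃) :
    IsUnitarilyTridiagonalisable A := by
  classical
  set E := EuclideanSpace ℂ (Fin 4)
  let e : (Fin 4 → ℂ) ≃ₗ[ℂ] E := (WithLp.linearEquiv 2 ℂ (Fin 4 → ℂ)).symm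
  let G₁ : Submodule ℂ E := F₁.map (e : (Fin 4 → ℂ) →ₗ[ℂ] E)
  let G₂ : Submodule ℂ E := F₂.map (e : (Fin 4 → ℂ) →ₗ[ℂ] E)
  let G₃ : Submodule ℂ E := F₃.map (e : (Fin 4 → ℂ) →ₗ[ℂ] E)
  have e1 : Module.finrank ℂ G₁ = 1 := by rw [LinearEquiv.finrank_map_eq]; exact d1
  have e2 : Module.finrank ℂ G₂ = 2 := by rw [LinearEquiv.finrank_map_eq]; exact d2
  have e3 : Module.finrank ℂ G₃ = 3 := by rw [LinearEquiv.finrank_map_eq]; exact d3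
  have g12 : G₁ ≤ G₂ := Submodule.map_mono h12
  have g23 : G₂ ≤ G₃ := Submodule.map_mono h23
  -- étrict inclusions
  have lt12 : G₁ < G₂ := Submodule.lt_of_le_of_finrank_lt_finrank g12 (by omega)
  have lt23 : G₂ < G₃ := Submodule.lt_of_le_of_finrank_lt_finrank g23 (by omega)
  have lt3top : G₃ < ⊤ := by
    refine Submodule.lt_of_le_of_finrank_lt_finrank le_top ?_
    rw [finrank_top, e3]
    simp [E, finrank_euclideanSpace_fin]
  -- pick a flag-adapted basis
  have hG1ne : G₁ ≠ ⊥ := by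
    intro h; rw [h, finrank_bot] at e1; exact one_ne_zero e1.symm
  obtain ⟨g1, hg1G, hg1ne⟩ := Submodule.exists_mem_ne_zero_of_ne_bot hG1ne
  obtain ⟨g2, hg2G, hg2n⟩ := SetLike.exists_of_lt lt12
  obtain ⟨g3, hg3G, hg3n⟩ := SetLike.exists_of_lt lt23
  obtain ⟨g4, _, hg4n⟩ := SetLike.exists_of_lt lt3top
  -- linear independence of prefixes
  have li1 : LinearIndependent ℂ ![g1] :=
    linearIndependent_unique_iff.2 hg1ne
  have r1 : Set.range ![g1] = {g1} := by simp
  have li2 : LinearIndependent ℂ ![g1, g2] := by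
    have : ![g1, g2] = Fin.snoc ![g1] g2 := by
      funext i; fin_cases i <;> rfl
    rw [this, linearIndependent_fin_snoc]
    refine ⟨li1, fun h => hg2n ?_⟩
    rw [r1] at h
    exact (Submodule.span_singleton_le_iff_mem _ _).2 hg1G h
  have r2 : Set.range ![g1, g2] = {g1, g2} := by
    rw [Matrix.range_cons, Matrix.range_cons, Matrix.range_empty, Set.union_empty,
      Set.singleton_union]
  have span2le : Submodule.span ℂ {g1, g2} ≤ G₂ :=
    Submodule.span_le.2 (by rintro x (rfl | rfl); exacts [g12 hg1G, hg2G])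
  have li3 : LinearIndependent ℂ ![g1, g2, g3] := by
    have : ![g1, g2, g3] = Fin.snoc ![g1, g2] g3 := by
      funext i; fin_cases i <;> rfl
    rw [this, linearIndependent_fin_snoc]
    refine ⟨li2, fun h => hg3n ?_⟩
    rw [r2] at h
    exact span2le h
  have r3 : Set.range ![g1, g2, g3] = {g1, g2, g3} := by
    rw [Matrix.range_cons, Matrix.range_cons, Matrix.range_cons, Matrix.range_empty,
      Set.union_empty, Set.singleton_union, Set.singleton_union]
  have span3le : Submodule.span ℂ {g1, g2, g3} ≤ G₃ :=
    Submodule.span_le.2 (by rintro x (rfl | rfl | rfl); exacts [g23 (g12 hg1G), g23 hg2G, hg3G])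
  have li4 : LinearIndependent ℂ ![g1, g2, g3, g4] := by
    have : ![g1, g2, g3, g4] = Fin.snoc ![g1, g2, g3] g4 := by
      funext i; fin_cases i <;> rfl
    rw [this, linearIndependent_fin_snoc]
    refine ⟨li3, fun h => hg4n ?_⟩
    rw [r3] at h
    exact span3le h
  set f : Fin 4 → E := ![g1, g2, g3, g4] with hf
  -- images of lower sets
  have iic0 : Set.Iic (0 : Fin 4) = {0} := by
    ext x; fin_cases x <;> simp <;> decide
  have iic1 : Set.Iic (1 : Fin 4) = {0, 1} := by
    ext x; fin_cases x <;> simp <;> decide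
  have iic2 : Set.Iic (2 : Fin 4) = {0, 1, 2} := by
    ext x; fin_cases x <;> simp <;> decide
  have im0 : f '' Set.Iic 0 = {g1} := by rw [iic0]; simp [hf]
  have im1 : f '' Set.Iic 1 = {g1, g2} := by
    rw [iic1, Set.image_insert_eq, Set.image_singleton]
    simp [hf]
  have im2 : f '' Set.Iic 2 = {g1, g2, g3} := by
    rw [iic2, Set.image_insert_eq, Set.image_insert_eq, Set.image_singleton]
    simp [hf]
  -- the spans of the prefixes agree with the flag
  have s0 : Submodule.span ℂ (f '' Set.Iic 0) = G₁ := by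
    rw [im0]
    refine Submodule.eq_of_le_of_finrank_le
      ((Submodule.span_singleton_le_iff_mem _ _).2 hg1G) ?_
    rw [e1, finrank_span_singleton hg1ne]
  have s1 : Submodule.span ℂ (f '' Set.Iic 1) = G₂ := by
    rw [im1]
    refine Submodule.eq_of_le_of_finrank_le span2le ?_
    rw [e2, ← r2, finrank_span_eq_card li2, Fintype.card_fin]
  have s2 : Submodule.span ℂ (f '' Set.Iic 2) = G₃ := by
    rw [im2]
    refine Submodule.eq_of_le_of_finrank_le span3le ?_
    rw [e3, ← r3, finrank_span_eq_card li3, Fintype.card_fin]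
  -- Gram–Schmidt orthonormal basis
  have hcard : Module.finrank ℂ E = Fintype.card (Fin 4) := by
    simp [E, finrank_euclideanSpace_fin]
  haveI : WellFoundedLT (Fin 4) := inferInstance
  set b : OrthonormalBasis (Fin 4) ℂ E := gramSchmidtOrthonormalBasis (ι := Fin 4) (𝕜 := ℂ) (E := E) hcard f with hbdef
  have hbapp : ∀ i, b i = gramSchmidtNormed ℂ f i := by
    intro i
    refine gramSchmidtOrthonormalBasis_apply hcard ?_
    intro h
    have := gramSchmidtNormed_unit_length i li4
    rw [h, norm_zero] at this
    exact one_ne_zero this.symm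
  have bspan : ∀ c : Fin 4, Submodule.span ℂ (⇑b '' Set.Iic c)
      = Submodule.span ℂ (f '' Set.Iic c) := by
    intro c
    have : ⇑b '' Set.Iic c = gramSchmidtNormed ℂ f '' Set.Iic c := by
      apply Set.image_congr; intro i _; exact hbapp i
    rw [this, span_gramSchmidtNormed, span_gramSchmidt_Iic]
  have bs0 : Submodule.span ℂ (⇑b '' Set.Iic 0) = G₁ := by rw [bspan, s0]
  have bs1 : Submodule.span ℂ (⇑b '' Set.Iic 1) = G₂ := by rw [bspan, s1]
  have bs2 : Submodule.span ℂ (⇑b '' Set.Iic 2) = G₃ := by rw [bspan, s2]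
  have hb0 : b 0 ∈ G₁ := by
    rw [← bs0]; exact Submodule.subset_span ⟨0, by simp, rfl⟩
  have hb1 : b 1 ∈ G₂ := by
    rw [← bs1]; exact Submodule.subset_span ⟨1, by simp, rfl⟩
  -- the action maps
  have hT1 : ∀ x ∈ G₁, e (A.mulVecLin (e.symm x)) ∈ G₂ := by
    rintro x ⟨y, hy, rfl⟩
    exact ⟨A.mulVecLin y, hA1 ⟨y, hy, rfl⟩, by simp⟩
  have hT2 : ∀ x ∈ G₂, e (A.mulVecLin (e.symm x)) ∈ G₃ := by
    rintro x ⟨y, hy, rfl⟩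
    exact ⟨A.mulVecLin y, hA2 ⟨y, hy, rfl⟩, by simp⟩
  have hS1 : ∀ x ∈ G₁, e (Aᴴ.mulVecLin (e.symm x)) ∈ G₂ := by
    rintro x ⟨y, hy, rfl⟩
    exact ⟨Aᴴ.mulVecLin y, hB1 ⟨y, hy, rfl⟩, by simp⟩
  have hS2 : ∀ x ∈ G₂, e (Aᴴ.mulVecLin (e.symm x)) ∈ G₃ := by
    rintro x ⟨y, hy, rfl⟩
    exact ⟨Aᴴ.mulVecLin y, hB2 ⟨y, hy, rfl⟩, by simp⟩
  -- the unitary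
  set U : Matrix (Fin 4) (Fin 4) ℂ := Matrix.of (fun i k => star (b i k : ℂ)) with hU
  have inner_formula : ∀ x y : E, (inner ℂ x y : ℂ) = ∑ k, star (x k) * y k := by
    intro x y
    rw [PiLp.inner_apply]
    congr 1
    funext k; simp [RCLike.inner_apply, mul_comm]
  have happ : ∀ (w : Fin 4 → ℂ) (k : Fin 4), (e w) k = w k := fun _ _ => rfl
  have happ' : ∀ (x : E) (k : Fin 4), (e.symm x) k = x k := fun _ _ => rfl
  have hUmem : U ∈ Matrix.unitaryGroup (Fin 4) ℂ := by
    rw [Matrix.mem_unitaryGroup_iff]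
    ext i j
    have : (U * star U) i j = (inner ℂ (b i) (b j) : ℂ) := by
      rw [Matrix.mul_apply, inner_formula]
      congr 1; funext k
      simp [hU, Matrix.star_apply, mul_comm]
    rw [this, orthonormal_iff_ite.1 b.orthonormal, Matrix.one_apply]
  have key : ∀ i j, (U * A * Uᴴ) i j = (inner ℂ (b i) (e (A.mulVecLin (e.symm (b j)))) : ℂ) := by
    intro i j
    calc (U * A * Uᴴ) i j = ∑ l, ∑ k, star (b i k) * A k l * b j l := by
          simp [Matrix.mul_apply, hU, Matrix.conjTranspose_apply, Finset.sum_mul, star_star]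
      _ = ∑ k, ∑ l, star (b i k) * A k l * b j l := Finset.sum_comm
      _ = ∑ k, star (b i k) * ∑ l, A k l * b j l := by
          simp [Finset.mul_sum, mul_assoc]
      _ = _ := by
          rw [inner_formula]
          refine Finset.sum_congr rfl fun k _ => ?_
          rw [happ, Matrix.mulVecLin_apply]
          rfl
  have key' : ∀ i j, (U * A * Uᴴ) i j
      = star (inner ℂ (b j) (e (Aᴴ.mulVecLin (e.symm (b i)))) : ℂ) := by
    intro i j
    calc (U * A * Uᴴ) i j = ∑ l, ∑ k, star (b i k) * A k l * b j l := by
          simp [Matrix.mul_apply, hU, Matrix.conjTranspose_apply, Finset.sum_mul, star_star]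
      _ = star (∑ l, star (b j l) * ∑ k, Aᴴ l k * b i k) := by
          rw [star_sum]
          congr 1; funext l
          rw [star_mul', star_star, star_sum, Finset.mul_sum]
          congr 1; funext k
          rw [star_mul', Matrix.conjTranspose_apply, star_star]
          ring
      _ = _ := by
          rw [inner_formula]
          congr 1
  refine ⟨U, hUmem, ?_⟩
  intro i j hij
  fin_cases i <;> fin_cases j <;>
    first
      | exact absurd hij (by decide)
      | (rw [key]
         exact inner_eq_zero_of_mem_span_ortho (s := Set.Iic 1) b.orthonormal
           (by rw [Set.mem_Iic]; decide) (bs1.symm ▸ hT1 _ hb0))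
      | (rw [key]
         exact inner_eq_zero_of_mem_span_ortho (s := Set.Iic 2) b.orthonormal
           (by rw [Set.mem_Iic]; decide) (bs2.symm ▸ hT2 _ hb1))
      | (rw [key']
         exact star_eq_zero.2 (inner_eq_zero_of_mem_span_ortho (s := Set.Iic 1) b.orthonormal
           (by rw [Set.mem_Iic]; decide) (bs1.symm ▸ hS1 _ hb0)))
      | (rw [key']
         exact star_eq_zero.2 (inner_eq_zero_of_mem_span_ortho (s := Set.Iic 2) b.orthonormal
           (by rw [Set.mem_Iic]; decide) (bs2.symm ▸ hS2 _ hb1)))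

end Aux

theorem flag_of_coincident_W3 (A : Matrix (Fin 4) (Fin 4) ℂ)
    (hcommon : ¬ ∃ v : Fin 4 → ℂ, v ≠ 0 ∧ (∃ μ : ℂ, A.mulVec v = μ • v) ∧
      (∃ ν : ℂ, Aᴴ.mulVec v = ν • v))
    (v : Fin 4 → ℂ) (hv : v ≠ 0)
    (W : Submodule ℂ (Fin 4 → ℂ))
    (hWdef : W = Submodule.span ℂ {v, A.mulVec v, Aᴴ.mulVec v})
    (hWdim : Module.finrank ℂ W = 2)
    (W₃ : Submodule ℂ (Fin 4 → ℂ))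
    (hW₃ : W₃ = W ⊔ W.map A.mulVecLin)
    (hW₃' : W₃ = W ⊔ W.map Aᴴ.mulVecLin)
    (hW₃dim : Module.finrank ℂ W₃ = 3) :
    ((Submodule.span ℂ {v}).map A.mulVecLin ≤ W ∧
     (Submodule.span ℂ {v}).map Aᴴ.mulVecLin ≤ W ∧
     W.map A.mulVecLin ≤ W₃ ∧ W.map Aᴴ.mulVecLin ≤ W₃) ∧
    IsUnitarilyTridiagonalisable A := by
  have hvW : v ∈ W := hWdef ▸ Submodule.subset_span (by simp)
  have hAvW : A.mulVec v ∈ W := hWdef ▸ Submodule.subset_span (by simp)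
  have hAHvW : Aᴴ.mulVec v ∈ W := hWdef ▸ Submodule.subset_span (by simp)
  have hA1 : (Submodule.span ℂ {v}).map A.mulVecLin ≤ W := by
    rw [Submodule.map_span]
    exact Submodule.span_le.2 (by rintro x ⟨y, rfl | h, rfl⟩ <;> simp_all [Matrix.mulVecLin_apply])
  have hB1 : (Submodule.span ℂ {v}).map Aᴴ.mulVecLin ≤ W := by
    rw [Submodule.map_span]
    exact Submodule.span_le.2 (by rintro x ⟨y, rfl | h, rfl⟩ <;> simp_all [Matrix.mulVecLin_apply])
  have hA2 : W.map A.mulVecLin ≤ W₃ := hW₃ ▸ le_sup_right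
  have hB2 : W.map Aᴴ.mulVecLin ≤ W₃ := hW₃' ▸ le_sup_right
  have h12 : Submodule.span ℂ {v} ≤ W := (Submodule.span_singleton_le_iff_mem _ _).2 hvW
  have h23 : W ≤ W₃ := hW₃ ▸ le_sup_left
  exact ⟨⟨hA1, hB1, hA2, hB2⟩, tridiag_of_flag A _ W W₃ h12 h23
    (finrank_span_singleton hv) hWdim hW₃dim hA1 hA2 hB1 hB2⟩
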